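/- Let p ≥ 1, m > 0, let μ be a Borel probability measure on 𝕋^p, and let C₁₆, C₁₇ : (−m,0] → [0,∞) be functions such that C₁₇(T) → 0 as T → −m from the right, and such that C₁₆ and C₁₇ are bounded on [−m+ε, 0] for every ε ∈ (0,m). Let 𝒟 be the set of all maps R : [−m,0] → P(𝕋^p) such that: R is continuous with respect to W₁; R(−m) = μ; there exists ρ : (−m,0] × 𝕋^p → ℝ with R(t) equal to the measure with density ρ(t,·) with respect to 𝓛^p for every t ∈ (−m,0]; and for every T ∈ (−m,0], the Lipschitz norm of ρ on [T,0] × 𝕋^p is at most C₁₆(T) and W₁(R(T), μ) ≤ C₁₇(T). Then 𝒟 is compact with respect to the distance (R₁,R₂) ↦ sup_{t∈[−m,0]} W₁(R₁(t), R₂(t)). -/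

import Mathlib

open MeasureTheory Set Filter
set_option linter.unusedSectionVars false
set_option maxHeartbeats 1000000
set_option synthInstance.maxHeartbeats 400000

/-- The `p`-dimensional torus `𝕋^p = ℝ^p/ℤ^p`, with its quotient metric and its Haar
probability measure (`volume`). -/
abbrev Torus (p : ℕ) := Fin p → AddCircle (1 : ℝ)

/-- The 1-Wasserstein distance: the infimum of `∫ dist(x,y) dγ` over all couplings `γ`. -/
noncomputable def W1 {X : Type*} [MetricSpace X] [MeasurableSpace X]
    (μ ν : Measure X) : ℝ :=
  sInf {r : ℝ | ∃ γ : Measure (X × X), IsProbabilityMeasure γ ∧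
    γ.map Prod.fst = μ ∧ γ.map Prod.snd = ν ∧ r = ∫ q, dist q.1 q.2 ∂γ}

section W1
variable {X : Type*} [MetricSpace X] [CompactSpace X] [MeasurableSpace X] [BorelSpace X]
  [SecondCountableTopology X] [Nonempty X]

lemma dist_le_diam (x y : X) : dist x y ≤ Metric.diam (univ : Set X) :=
  Metric.dist_le_diam_of_mem isCompact_univ.isBounded (mem_univ x) (mem_univ y)

lemma integrable_of_bound {Y : Type*} [MeasurableSpace Y] (ν : Measure Y) [IsFiniteMeasure ν]
    {f : Y → ℝ} (hf : AEStronglyMeasurable f ν) (C : ℝ) (h : ∀ y, |f y| ≤ C) :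
    Integrable f ν :=
  (integrable_const C).mono' hf (ae_of_all _ (by simpa using h))

lemma integrable_distg {Y : Type*} [MeasurableSpace Y] [TopologicalSpace Y]
    [OpensMeasurableSpace Y] (ν : Measure Y) [IsFiniteMeasure ν] {g h : Y → X}
    (hg : Continuous g) (hh : Continuous h) :
    Integrable (fun y => dist (g y) (h y)) ν :=
  integrable_of_bound ν (hg.dist hh).aestronglyMeasurable (Metric.diam (univ : Set X))
    (fun y => by rw [abs_of_nonneg dist_nonneg]; exact dist_le_diam _ _)

lemma W1_bddBelow (μ ν : Measure X) :
    ∀ r ∈ {r : ℝ | ∃ γ : Measure (X × X), IsProbabilityMeasure γ ∧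
      γ.map Prod.fst = μ ∧ γ.map Prod.snd = ν ∧ r = ∫ q, dist q.1 q.2 ∂γ}, 0 ≤ r := by
  rintro r ⟨γ, hγ, -, -, rfl⟩
  exact integral_nonneg fun q => dist_nonneg

lemma W1_nonneg (μ ν : Measure X) : 0 ≤ W1 μ ν := Real.sInf_nonneg (W1_bddBelow μ ν)

lemma W1_le_cost {μ ν : Measure X} {γ : Measure (X × X)} (hγ : IsProbabilityMeasure γ)
    (h1 : γ.map Prod.fst = μ) (h2 : γ.map Prod.snd = ν) :
    W1 μ ν ≤ ∫ q, dist q.1 q.2 ∂γ :=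
  csInf_le ⟨0, W1_bddBelow μ ν⟩ ⟨γ, hγ, h1, h2, rfl⟩

lemma W1_set_nonempty (μ ν : Measure X) [IsProbabilityMeasure μ] [IsProbabilityMeasure ν] :
    ∃ r, r ∈ {r : ℝ | ∃ γ : Measure (X × X), IsProbabilityMeasure γ ∧
      γ.map Prod.fst = μ ∧ γ.map Prod.snd = ν ∧ r = ∫ q, dist q.1 q.2 ∂γ} := by
  refine ⟨_, ⟨μ.prod ν, inferInstance, ?_, ?_, rfl⟩⟩
  · rw [← Measure.fst, Measure.fst_prod]
  · rw [← Measure.snd, Measure.snd_prod]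

lemma W1_le_diam (μ ν : Measure X) [IsProbabilityMeasure μ] [IsProbabilityMeasure ν] :
    W1 μ ν ≤ Metric.diam (univ : Set X) := by
  refine le_trans (W1_le_cost (γ := μ.prod ν) inferInstance ?_ ?_) ?_
  · rw [← Measure.fst, Measure.fst_prod]
  · rw [← Measure.snd, Measure.snd_prod]
  · calc ∫ q : X × X, dist q.1 q.2 ∂(μ.prod ν)
        ≤ ∫ _q : X × X, Metric.diam (univ : Set X) ∂(μ.prod ν) := by
          refine integral_mono (integrable_distg _ continuous_fst continuous_snd)
            (integrable_const _) fun q => dist_le_diam _ _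
      _ = Metric.diam (univ : Set X) := by simp

lemma W1_self (μ : Measure X) [IsProbabilityMeasure μ] : W1 μ μ = 0 := by
  have hdiag : Measurable fun x : X => (x, x) := measurable_id.prodMk measurable_id
  have h1 : (μ.map fun x : X => (x, x)).map Prod.fst = μ := by
    rw [Measure.map_map measurable_fst hdiag]; exact Measure.map_id
  have h2 : (μ.map fun x : X => (x, x)).map Prod.snd = μ := by
    rw [Measure.map_map measurable_snd hdiag]; exact Measure.map_id
  refine le_antisymm ?_ (W1_nonneg μ μ)
  refine le_trans (W1_le_cost (Measure.isProbabilityMeasure_map hdiag.aemeasurable) h1 h2) ?_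
  have := integral_map (φ := fun x : X => (x, x)) (μ := μ) hdiag.aemeasurable
    (f := fun q : X × X => dist q.1 q.2)
    ((continuous_fst.dist continuous_snd).aestronglyMeasurable)
  rw [this]; simp

lemma W1_symm_le (μ ν : Measure X) [IsProbabilityMeasure μ] [IsProbabilityMeasure ν] :
    W1 ν μ ≤ W1 μ ν := by
  refine le_csInf (W1_set_nonempty μ ν) ?_
  rintro r ⟨γ, hγ, h1, h2, rfl⟩
  haveI := hγ
  have hswap : Measurable (Prod.swap : X × X → X × X) := measurable_swap
  have c1 : (γ.map Prod.swap).map Prod.fst = ν := by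
    rw [Measure.map_map measurable_fst hswap]; exact h2
  have c2 : (γ.map Prod.swap).map Prod.snd = μ := by
    rw [Measure.map_map measurable_snd hswap]; exact h1
  refine le_trans (W1_le_cost (Measure.isProbabilityMeasure_map hswap.aemeasurable) c1 c2) ?_
  have := integral_map (φ := (Prod.swap : X × X → X × X)) (μ := γ) hswap.aemeasurable
    (f := fun q : X × X => dist q.1 q.2)
    ((continuous_fst.dist continuous_snd).aestronglyMeasurable)
  rw [this]
  simp only [Prod.fst_swap, Prod.snd_swap]
  exact le_of_eq (by congr 1; funext q; exact dist_comm _ _)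

lemma W1_symm (μ ν : Measure X) [IsProbabilityMeasure μ] [IsProbabilityMeasure ν] :
    W1 μ ν = W1 ν μ := le_antisymm (W1_symm_le ν μ) (W1_symm_le μ ν)


variable [PolishSpace X]
open ProbabilityTheory

variable {X : Type*} [MetricSpace X] [CompactSpace X] [MeasurableSpace X] [BorelSpace X]
  [SecondCountableTopology X] [Nonempty X] [PolishSpace X]

-- gluing
lemma glue_exists (μ ν ρ : Measure X) [IsProbabilityMeasure ν]
    (γ₁ γ₂ : Measure (X × X)) (hγ₁ : IsProbabilityMeasure γ₁) (hγ₂ : IsProbabilityMeasure γ₂)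
    (h11 : γ₁.map Prod.fst = μ) (h12 : γ₁.map Prod.snd = ν)
    (h21 : γ₂.map Prod.fst = ν) (h22 : γ₂.map Prod.snd = ρ) :
    ∃ γ : Measure (X × X), IsProbabilityMeasure γ ∧ γ.map Prod.fst = μ ∧
      γ.map Prod.snd = ρ ∧
      ∫ q, dist q.1 q.2 ∂γ ≤ ∫ q, dist q.1 q.2 ∂γ₁ + ∫ q, dist q.1 q.2 ∂γ₂ := by
  haveI := hγ₁; haveI := hγ₂
  set γ₁' : Measure (X × X) := γ₁.map Prod.swap with hγ₁'def
  haveI : IsProbabilityMeasure γ₁' := Measure.isProbabilityMeasure_map measurable_swap.aemeasurable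
  have hfst₁ : γ₁'.fst = ν := by
    rw [Measure.fst, hγ₁'def, Measure.map_map measurable_fst measurable_swap]
    exact h12
  have hfst₂ : γ₂.fst = ν := h21
  set κ := γ₁'.condKernel with hκdef
  set η := γ₂.condKernel with hηdef
  have hκ : ν.compProd κ = γ₁' := by
    conv_lhs => rw [← hfst₁]
    exact γ₁'.disintegrate _
  have hη : ν.compProd η = γ₂ := by
    conv_lhs => rw [← hfst₂]
    exact γ₂.disintegrate _
  set τ : Measure (X × (X × X)) := ν.compProd (κ.prod η) with hτdef
  haveI : IsProbabilityMeasure τ := by infer_instance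
  -- key marginal identities
  have key1 : τ.map (fun q => (q.1, q.2.1)) = γ₁' := by
    rw [← hκ]
    ext s hs
    rw [Measure.map_apply (measurable_fst.prodMk measurable_snd.fst) hs,
      Measure.compProd_apply (hs.preimage (measurable_fst.prodMk measurable_snd.fst)),
      Measure.compProd_apply hs]
    congr 1
    funext y
    have : (Prod.mk y ⁻¹' ((fun q : X × X × X => (q.1, q.2.1)) ⁻¹' s))
        = Prod.fst ⁻¹' (Prod.mk y ⁻¹' s) := rfl
    rw [this]
    have e : (κ.prod η) y (Prod.fst ⁻¹' (Prod.mk y ⁻¹' s)) = (κ.prod η).fst y (Prod.mk y ⁻¹' s) :=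
      (Kernel.fst_apply' _ _ (measurable_prodMk_left hs)).symm
    rw [e, Kernel.fst_prod]
  have key2 : τ.map (fun q => (q.1, q.2.2)) = γ₂ := by
    rw [← hη]
    ext s hs
    rw [Measure.map_apply (measurable_fst.prodMk measurable_snd.snd) hs,
      Measure.compProd_apply (hs.preimage (measurable_fst.prodMk measurable_snd.snd)),
      Measure.compProd_apply hs]
    congr 1
    funext y
    have : (Prod.mk y ⁻¹' ((fun q : X × X × X => (q.1, q.2.2)) ⁻¹' s))
        = Prod.snd ⁻¹' (Prod.mk y ⁻¹' s) := rfl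
    rw [this]
    have e : (κ.prod η) y (Prod.snd ⁻¹' (Prod.mk y ⁻¹' s)) = (κ.prod η).snd y (Prod.mk y ⁻¹' s) :=
      (Kernel.snd_apply' _ _ (measurable_prodMk_left hs)).symm
    rw [e, Kernel.snd_prod]
  set g : X × (X × X) → X × X := fun q => (q.2.1, q.2.2) with hgdef
  have hg : Measurable g := measurable_snd.fst.prodMk measurable_snd.snd
  refine ⟨τ.map g, Measure.isProbabilityMeasure_map hg.aemeasurable, ?_, ?_, ?_⟩
  · rw [Measure.map_map measurable_fst hg]
    have : (Prod.fst ∘ g) = (Prod.snd ∘ fun q : X × (X × X) => (q.1, q.2.1)) := rfl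
    rw [this, ← Measure.map_map measurable_snd
      (measurable_fst.prodMk measurable_snd.fst), key1]
    rw [hγ₁'def, Measure.map_map measurable_snd measurable_swap]
    exact h11
  · rw [Measure.map_map measurable_snd hg]
    have : (Prod.snd ∘ g) = (Prod.snd ∘ fun q : X × (X × X) => (q.1, q.2.2)) := rfl
    rw [this, ← Measure.map_map measurable_snd
      (measurable_fst.prodMk measurable_snd.snd), key2]
    exact h22
  · have hint : ∫ q, dist q.1 q.2 ∂(τ.map g) = ∫ q, dist (g q).1 (g q).2 ∂τ :=
      integral_map hg.aemeasurable ((continuous_fst.dist continuous_snd).aestronglyMeasurable)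
    rw [hint]
    have step1 : ∫ q, dist (g q).1 (g q).2 ∂τ
        ≤ ∫ q : X × (X × X), (dist q.2.1 q.1 + dist q.1 q.2.2) ∂τ := by
      refine integral_mono ?_ ?_ ?_
      · exact integrable_of_bound τ
          ((continuous_snd.fst.dist continuous_snd.snd).aestronglyMeasurable)
          (Metric.diam (univ : Set X))
          (fun y => by rw [abs_of_nonneg dist_nonneg]; exact
            Metric.dist_le_diam_of_mem isCompact_univ.isBounded (mem_univ _) (mem_univ _))
      · exact integrable_of_bound τ
          ((continuous_snd.fst.dist continuous_fst).add
            (continuous_fst.dist continuous_snd.snd)).aestronglyMeasurable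
          (2 * Metric.diam (univ : Set X))
          (fun y => by
            rw [abs_of_nonneg (add_nonneg dist_nonneg dist_nonneg), two_mul]
            exact add_le_add
              (Metric.dist_le_diam_of_mem isCompact_univ.isBounded (mem_univ _) (mem_univ _))
              (Metric.dist_le_diam_of_mem isCompact_univ.isBounded (mem_univ _) (mem_univ _)))
      · intro q; exact dist_triangle _ _ _
    refine le_trans step1 ?_
    rw [integral_add]
    · refine add_le_add ?_ ?_
      · have e1 : ∫ q : X × (X × X), dist q.2.1 q.1 ∂τ
            = ∫ q : X × X, dist q.2 q.1 ∂(τ.map (fun q => (q.1, q.2.1))) := by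
          rw [integral_map (measurable_fst.prodMk measurable_snd.fst).aemeasurable
            ((continuous_snd.dist continuous_fst).aestronglyMeasurable)]
        rw [e1, key1, hγ₁'def,
          integral_map measurable_swap.aemeasurable ((continuous_snd.dist continuous_fst).aestronglyMeasurable)]
        simp only [Prod.snd_swap, Prod.fst_swap]
        exact le_of_eq rfl
      · have e2 : ∫ q : X × (X × X), dist q.1 q.2.2 ∂τ
            = ∫ q : X × X, dist q.1 q.2 ∂(τ.map (fun q => (q.1, q.2.2))) := by
          rw [integral_map (measurable_fst.prodMk measurable_snd.snd).aemeasurable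
            ((continuous_fst.dist continuous_snd).aestronglyMeasurable)]
        rw [e2, key2]
    · exact integrable_of_bound τ
        ((continuous_snd.fst.dist continuous_fst).aestronglyMeasurable)
        (Metric.diam (univ : Set X))
        (fun y => by rw [abs_of_nonneg dist_nonneg]; exact
          Metric.dist_le_diam_of_mem isCompact_univ.isBounded (mem_univ _) (mem_univ _))
    · exact integrable_of_bound τ
        ((continuous_fst.dist continuous_snd.snd).aestronglyMeasurable)
        (Metric.diam (univ : Set X))
        (fun y => by rw [abs_of_nonneg dist_nonneg]; exact
          Metric.dist_le_diam_of_mem isCompact_univ.isBounded (mem_univ _) (mem_univ _))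

lemma W1_triangle (μ ν ρ : Measure X) [IsProbabilityMeasure μ] [IsProbabilityMeasure ν]
    [IsProbabilityMeasure ρ] : W1 μ ρ ≤ W1 μ ν + W1 ν ρ := by
  refine le_of_forall_pos_le_add fun ε hε => ?_
  obtain ⟨r₁, ⟨γ₁, hγ₁, h11, h12, rfl⟩, hr₁⟩ :=
    Real.lt_sInf_add_pos (W1_set_nonempty μ ν) (half_pos hε)
  obtain ⟨r₂, ⟨γ₂, hγ₂, h21, h22, rfl⟩, hr₂⟩ :=
    Real.lt_sInf_add_pos (W1_set_nonempty ν ρ) (half_pos hε)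
  obtain ⟨γ, hγ, hf, hs, hcost⟩ := glue_exists μ ν ρ γ₁ γ₂ hγ₁ hγ₂ h11 h12 h21 h22
  calc W1 μ ρ ≤ ∫ q, dist q.1 q.2 ∂γ := W1_le_cost hγ hf hs
    _ ≤ ∫ q, dist q.1 q.2 ∂γ₁ + ∫ q, dist q.1 q.2 ∂γ₂ := hcost
    _ ≤ (W1 μ ν + ε / 2) + (W1 ν ρ + ε / 2) := add_le_add hr₁.le hr₂.le
    _ = W1 μ ν + W1 ν ρ + ε := by ring

lemma W1_wd_le (vol : Measure X) [IsProbabilityMeasure vol] {f g : X → ℝ}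
    (hf : Continuous f) (hg : Continuous g) (hf0 : ∀ x, 0 ≤ f x) (hg0 : ∀ x, 0 ≤ g x)
    (hpf : IsProbabilityMeasure (vol.withDensity fun x => ENNReal.ofReal (f x)))
    (hpg : IsProbabilityMeasure (vol.withDensity fun x => ENNReal.ofReal (g x)))
    {E : ℝ} (hE : ∀ x, |f x - g x| ≤ E) :
    W1 (vol.withDensity fun x => ENNReal.ofReal (f x))
      (vol.withDensity fun x => ENNReal.ofReal (g x)) ≤ Metric.diam (univ : Set X) * E := by
  have hE0 : 0 ≤ E := le_trans (abs_nonneg _) (hE (Classical.arbitrary X))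
  set h : X → ℝ := fun x => min (f x) (g x) with hhdef
  have hh : Continuous h := hf.min hg
  have hh0 : ∀ x, 0 ≤ h x := fun x => le_min (hf0 x) (hg0 x)
  have hhf : ∀ x, h x ≤ f x := fun x => min_le_left _ _
  have hhg : ∀ x, h x ≤ g x := fun x => min_le_right _ _
  set νh := vol.withDensity fun x => ENNReal.ofReal (h x) with hνh
  set ν₁ := vol.withDensity fun x => ENNReal.ofReal (f x - h x) with hν₁
  set ν₂ := vol.withDensity fun x => ENNReal.ofReal (g x - h x) with hν₂
  have hsplitf : vol.withDensity (fun x => ENNReal.ofReal (f x)) = νh + ν₁ := by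
    rw [hνh, hν₁, ← withDensity_add_left hh.measurable.ennreal_ofReal]
    congr 1
    funext x
    simp only [Pi.add_apply]
    rw [← ENNReal.ofReal_add (hh0 x) (sub_nonneg.2 (hhf x))]
    congr 1; ring
  have hsplitg : vol.withDensity (fun x => ENNReal.ofReal (g x)) = νh + ν₂ := by
    rw [hνh, hν₂, ← withDensity_add_left hh.measurable.ennreal_ofReal]
    congr 1
    funext x
    simp only [Pi.add_apply]
    rw [← ENNReal.ofReal_add (hh0 x) (sub_nonneg.2 (hhg x))]
    congr 1; ring
  have m1 : νh univ + ν₁ univ = 1 := by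
    rw [← Measure.add_apply, ← hsplitf]; exact hpf.measure_univ
  have m2 : νh univ + ν₂ univ = 1 := by
    rw [← Measure.add_apply, ← hsplitg]; exact hpg.measure_univ
  have hνhfin : νh univ ≠ ⊤ := by
    intro hcon; rw [hcon] at m1; simp at m1
  have hcc : ν₂ univ = ν₁ univ := by
    have := m1.trans m2.symm
    exact ((ENNReal.add_right_inj hνhfin).mp this).symm
  set c := ν₁ univ with hcdef
  have hcfin : c ≠ ⊤ := by
    intro hcon; rw [hcon] at m1; simp at m1
  have hcle : c ≤ 1 := by rw [← m1]; exact le_add_self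
  have hcE : c ≤ ENNReal.ofReal E := by
    have : c = ∫⁻ x, ENNReal.ofReal (f x - h x) ∂vol := by
      rw [hcdef, hν₁, withDensity_apply _ MeasurableSet.univ, Measure.restrict_univ]
    rw [this]
    calc ∫⁻ x, ENNReal.ofReal (f x - h x) ∂vol ≤ ∫⁻ _x, ENNReal.ofReal E ∂vol := by
          refine lintegral_mono fun x => ENNReal.ofReal_le_ofReal ?_
          have hx : h x = min (f x) (g x) := rfl
          have : f x - h x ≤ |f x - g x| := by
            rcases le_total (f x) (g x) with hle | hle
            · rw [hx, min_eq_left hle, sub_self]; exact abs_nonneg _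
            · rw [hx, min_eq_right hle]; exact le_abs_self _
          exact this.trans (hE x)
      _ = ENNReal.ofReal E := by simp
  have hctE : c.toReal ≤ E := ENNReal.toReal_le_of_le_ofReal hE0 hcE
  haveI : IsFiniteMeasure νh := ⟨lt_of_le_of_ne le_top hνhfin⟩
  haveI : IsFiniteMeasure ν₁ := ⟨lt_of_le_of_ne le_top hcfin⟩
  haveI : IsFiniteMeasure ν₂ := ⟨by rw [hcc]; exact lt_of_le_of_ne le_top hcfin⟩
  have hdiag : Measurable fun x : X => (x, x) := measurable_id.prodMk measurable_id
  by_cases hc0 : c = 0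
  · have h1 : ν₁ = 0 := Measure.measure_univ_eq_zero.mp hc0
    have h2 : ν₂ = 0 := Measure.measure_univ_eq_zero.mp (by rw [hcc]; exact hc0)
    have heq : vol.withDensity (fun x => ENNReal.ofReal (f x))
        = vol.withDensity (fun x => ENNReal.ofReal (g x)) := by
      rw [hsplitf, hsplitg, h1, h2]
    rw [heq]
    haveI := hpg
    rw [W1_self]
    exact mul_nonneg Metric.diam_nonneg hE0
  · set γ : Measure (X × X) := νh.map (fun x => (x, x)) + (c⁻¹ • ν₁.prod ν₂) with hγdef
    have hprodE : (ν₁.prod ν₂) univ = c * c := by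
      rw [← univ_prod_univ, Measure.prod_prod, hcc]
    have hsm : (c⁻¹ • ν₁.prod ν₂) univ = c := by
      rw [Measure.smul_apply, smul_eq_mul, hprodE, ← mul_assoc,
        ENNReal.inv_mul_cancel hc0 hcfin, one_mul]
    haveI : IsFiniteMeasure (c⁻¹ • ν₁.prod ν₂) :=
      ⟨by rw [hsm]; exact lt_of_le_of_ne le_top hcfin⟩
    have hγuniv : γ univ = 1 := by
      rw [hγdef, Measure.add_apply, Measure.map_apply hdiag MeasurableSet.univ,
        preimage_univ, hsm, m1]
    haveI hγprob : IsProbabilityMeasure γ := ⟨hγuniv⟩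
    have hmapfst : γ.map Prod.fst = vol.withDensity (fun x => ENNReal.ofReal (f x)) := by
      rw [hγdef, Measure.map_add _ _ measurable_fst,
        Measure.map_map measurable_fst hdiag, Measure.map_smul,
        Measure.map_fst_prod, hcc, hcdef]
      have : Measure.map (Prod.fst ∘ fun x : X => (x, x)) νh = νh := Measure.map_id
      rw [this, smul_smul, ENNReal.inv_mul_cancel hc0 hcfin, one_smul, hsplitf]
    have hmapsnd : γ.map Prod.snd = vol.withDensity (fun x => ENNReal.ofReal (g x)) := by
      rw [hγdef, Measure.map_add _ _ measurable_snd,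
        Measure.map_map measurable_snd hdiag, Measure.map_smul,
        Measure.map_snd_prod, hcdef]
      have : Measure.map (Prod.snd ∘ fun x : X => (x, x)) νh = νh := Measure.map_id
      rw [this, smul_smul, ENNReal.inv_mul_cancel hc0 hcfin, one_smul, hsplitg]
    refine le_trans (W1_le_cost hγprob hmapfst hmapsnd) ?_
    rw [hγdef, integral_add_measure]
    · have hdzero : ∫ q : X × X, dist q.1 q.2 ∂(νh.map fun x => (x, x)) = 0 := by
        rw [integral_map hdiag.aemeasurable
          ((continuous_fst.dist continuous_snd).aestronglyMeasurable)]
        simp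
      rw [hdzero, zero_add, integral_smul_measure]
      have hintle : ∫ q : X × X, dist q.1 q.2 ∂(ν₁.prod ν₂)
          ≤ Metric.diam (univ : Set X) * (c * c).toReal := by
        calc ∫ q : X × X, dist q.1 q.2 ∂(ν₁.prod ν₂)
            ≤ ∫ _q : X × X, Metric.diam (univ : Set X) ∂(ν₁.prod ν₂) :=
              integral_mono (integrable_distg _ continuous_fst continuous_snd)
                (integrable_const _) fun q => dist_le_diam _ _
          _ = Metric.diam (univ : Set X) * (c * c).toReal := by
              rw [integral_const, measureReal_def, hprodE, smul_eq_mul, mul_comm]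
      calc (c⁻¹).toReal • ∫ q : X × X, dist q.1 q.2 ∂(ν₁.prod ν₂)
          ≤ (c⁻¹).toReal * (Metric.diam (univ : Set X) * (c * c).toReal) := by
            rw [smul_eq_mul]
            exact mul_le_mul_of_nonneg_left hintle ENNReal.toReal_nonneg
        _ = Metric.diam (univ : Set X) * c.toReal := by
            rw [ENNReal.toReal_inv, ENNReal.toReal_mul]
            have hct0 : c.toReal ≠ 0 := by
              simp [ENNReal.toReal_ne_zero, hc0, hcfin]
            field_simp
        _ ≤ Metric.diam (univ : Set X) * E :=
            mul_le_mul_of_nonneg_left hctE Metric.diam_nonneg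
    · exact integrable_distg _ continuous_fst continuous_snd
    · exact integrable_distg _ continuous_fst continuous_snd

end W1


lemma lipset_compact {Y : Type*} [MetricSpace Y] [CompactSpace Y] {B L : ℝ} (hB : 0 ≤ B) :
    IsCompact {F : BoundedContinuousFunction Y ℝ | (∀ q, |F q| ≤ B) ∧ ∀ q q', dist (F q) (F q') ≤ L * dist q q'} := by
  set A := {F : BoundedContinuousFunction Y ℝ | (∀ q, |F q| ≤ B) ∧ ∀ q q', dist (F q) (F q') ≤ L * dist q q'} with hA
  have hclosed : IsClosed A := by
    have : A = (⋂ q, {F : BoundedContinuousFunction Y ℝ | |F q| ≤ B}) ∩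
        ⋂ q, ⋂ q', {F : BoundedContinuousFunction Y ℝ | dist (F q) (F q') ≤ L * dist q q'} := by
      ext F; simp [hA, mem_iInter, forall_and]
    rw [this]
    refine IsClosed.inter (isClosed_iInter fun q => ?_)
      (isClosed_iInter fun q => isClosed_iInter fun q' => ?_)
    · exact isClosed_le (continuous_abs.comp
        (continuous_eval_const _)) continuous_const
    · exact isClosed_le (Continuous.dist
        (continuous_eval_const _)
        (continuous_eval_const _)) continuous_const
  have hcomp := BoundedContinuousFunction.arzela_ascoli (α := Y) (β := ℝ)
    (Icc (-B) B) isCompact_Icc A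
    (fun F x hF => by
      have := hF.1 x
      rw [mem_Icc]
      constructor <;> [linarith [neg_abs_le (F x)]; linarith [le_abs_self (F x)]])
    ?_
  · rwa [hclosed.closure_eq] at hcomp
  · intro x
    rw [Metric.equicontinuousAt_iff]
    intro ε hε
    refine ⟨ε / (|L| + 1), by positivity, fun y hy i => ?_⟩
    calc dist (i.1 x) (i.1 y) ≤ L * dist y x := by rw [dist_comm]; exact i.2.2 y x
      _ ≤ |L| * dist y x := mul_le_mul_of_nonneg_right (le_abs_self L) dist_nonneg
      _ < ε := by
          rcases eq_or_lt_of_le (dist_nonneg (x := y) (y := x)) with h0 | h0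
          · rw [← h0, mul_zero]; exact hε
          · calc |L| * dist y x ≤ (|L| + 1) * dist y x := by nlinarith [dist_nonneg (x:=y) (y:=x)]
              _ < (|L| + 1) * (ε / (|L| + 1)) := by
                  refine mul_lt_mul_of_pos_left hy (by positivity)
              _ = ε := by field_simp



/-- Membership in the family `𝒟`: a `W₁`-continuous curve of probability measures on
`[−m,0]` starting at `μ`, admitting on `(−m,0]` a density `ρ` with respect to the Haar
measure, whose Lipschitz norm on `[T,0] × 𝕋^p` (sup norm plus least Lipschitz constant)
is at most `C₁₆ T`, and with `W₁(R(T),μ) ≤ C₁₇ T` for all `T ∈ (−m,0]`. -/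
def memD (p : ℕ) (m : ℝ) (μ : Measure (Torus p)) (C₁₆ C₁₇ : ℝ → ℝ)
    (R : ℝ → Measure (Torus p)) : Prop :=
  (∀ t ∈ Icc (-m) (0 : ℝ), IsProbabilityMeasure (R t)) ∧
  (∀ t ∈ Icc (-m) (0 : ℝ), ∀ ε > (0 : ℝ), ∃ δ > (0 : ℝ),
    ∀ s ∈ Icc (-m) (0 : ℝ), |s - t| < δ → W1 (R s) (R t) < ε) ∧
  R (-m) = μ ∧
  (∃ ρ : ℝ → Torus p → ℝ,
    (∀ t ∈ Ioc (-m) (0 : ℝ),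
      R t = (volume : Measure (Torus p)).withDensity fun x => ENNReal.ofReal (ρ t x)) ∧
    ∀ T ∈ Ioc (-m) (0 : ℝ), ∃ S K : ℝ, 0 ≤ S ∧ 0 ≤ K ∧
      (∀ t ∈ Icc T (0 : ℝ), ∀ x, |ρ t x| ≤ S) ∧
      (∀ t ∈ Icc T (0 : ℝ), ∀ s ∈ Icc T (0 : ℝ), ∀ x y,
        |ρ t x - ρ s y| ≤ K * (|t - s| + dist x y)) ∧
      S + K ≤ C₁₆ T) ∧
  ∀ T ∈ Ioc (-m) (0 : ℝ), W1 (R T) μ ≤ C₁₇ T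

instance torusVolumeProb (p : ℕ) : IsProbabilityMeasure (volume : Measure (Torus p)) := by
  constructor
  rw [MeasureTheory.volume_pi, Measure.pi_univ]
  simp [AddCircle.measure_univ]


/-- `𝒟` is (sequentially) compact for the distance
`(R₁,R₂) ↦ sup_{t ∈ [−m,0]} W₁(R₁(t), R₂(t))`. -/
theorem stmt16 (p : ℕ) (hp : 1 ≤ p) (m : ℝ) (hm : 0 < m)
    (μ : Measure (Torus p)) [IsProbabilityMeasure μ]
    (C₁₆ C₁₇ : ℝ → ℝ)
    (hnonneg : ∀ T ∈ Ioc (-m) (0 : ℝ), 0 ≤ C₁₆ T ∧ 0 ≤ C₁₇ T)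
    (hC17lim : Tendsto C₁₇ (nhdsWithin (-m) (Ioi (-m))) (nhds 0))
    (hbdd : ∀ ε ∈ Ioo (0 : ℝ) m, ∃ B : ℝ, ∀ T ∈ Icc (-m + ε) (0 : ℝ),
      C₁₆ T ≤ B ∧ C₁₇ T ≤ B) :
    ∀ R : ℕ → ℝ → Measure (Torus p), (∀ n, memD p m μ C₁₆ C₁₇ (R n)) →
      ∃ R₀, memD p m μ C₁₆ C₁₇ R₀ ∧ ∃ φ : ℕ → ℕ, StrictMono φ ∧
        Tendsto (fun n => ⨆ t : Icc (-m) (0 : ℝ), W1 (R (φ n) t) (R₀ t))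
          atTop (nhds 0) := by
  intro R hR
  classical
  set D := Metric.diam (univ : Set (Torus p)) with hD
  have hD0 : 0 ≤ D := Metric.diam_nonneg
  have hprob : ∀ n, ∀ t ∈ Icc (-m) (0:ℝ), IsProbabilityMeasure (R n t) := fun n => (hR n).1
  -- densities
  choose ρ hρwd hρprop using fun n => (hR n).2.2.2.1
  set f : ℕ → ℝ → Torus p → ℝ := fun n t x => max (ρ n t x) 0 with hfdef
  have hf0 : ∀ n t x, 0 ≤ f n t x := fun n t x => le_max_right _ _
  have hofReal : ∀ (a : ℝ), ENNReal.ofReal (max a 0) = ENNReal.ofReal a := by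
    intro a
    rcases le_total 0 a with h | h
    · rw [max_eq_left h]
    · rw [max_eq_right h, ENNReal.ofReal_of_nonpos h, ENNReal.ofReal_zero]
  have hfwd : ∀ n, ∀ t ∈ Ioc (-m) (0:ℝ),
      R n t = (volume : Measure (Torus p)).withDensity fun x => ENNReal.ofReal (f n t x) := by
    intro n t ht
    rw [hρwd n t ht]
    congr 1
    funext x
    exact (hofReal (ρ n t x)).symm
  have hfprop : ∀ n, ∀ T ∈ Ioc (-m) (0:ℝ), ∃ S K : ℝ, 0 ≤ S ∧ 0 ≤ K ∧
      (∀ t ∈ Icc T (0:ℝ), ∀ x, |f n t x| ≤ S) ∧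
      (∀ t ∈ Icc T (0:ℝ), ∀ s ∈ Icc T (0:ℝ), ∀ x y,
        |f n t x - f n s y| ≤ K * (|t - s| + dist x y)) ∧
      S + K ≤ C₁₆ T := by
    intro n T hT
    obtain ⟨S, K, hS0, hK0, hSbd, hKlip, hSK⟩ := hρprop n T hT
    refine ⟨S, K, hS0, hK0, fun t ht x => ?_, fun t ht s hs x y => ?_, hSK⟩
    · have h1 : |f n t x| = f n t x := abs_of_nonneg (hf0 n t x)
      rw [h1]
      calc f n t x ≤ |ρ n t x| := le_trans (max_le (le_abs_self _) (abs_nonneg _)) le_rfl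
        _ ≤ S := hSbd t ht x
    · calc |f n t x - f n s y| ≤ |ρ n t x - ρ n s y| := abs_max_sub_max_le_abs _ _ _
        _ ≤ K * (|t - s| + dist x y) := hKlip t ht s hs x y
  -- the time grid
  set T : ℕ → ℝ := fun k => -m + m / (k + 1) with hTdef
  have hTmem : ∀ k, T k ∈ Ioc (-m) (0:ℝ) := by
    intro k
    constructor
    · have : 0 < m / (k + 1 : ℝ) := by positivity
      simp only [hTdef]; linarith
    · have : m / (k + 1 : ℝ) ≤ m := by
        apply div_le_self hm.le
        have : (0:ℝ) ≤ (k:ℝ) := Nat.cast_nonneg k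
        linarith
      simp only [hTdef]; linarith
  have hTsmall : ∀ δ > (0:ℝ), ∃ k, T k < -m + δ := by
    intro δ hδ
    obtain ⟨k, hk⟩ := exists_nat_gt (m / δ)
    refine ⟨k, ?_⟩
    have hk1 : m / δ < (k:ℝ) + 1 := lt_of_lt_of_le hk (by linarith)
    have : m / ((k:ℝ) + 1) < δ := by
      rw [div_lt_iff₀ (by positivity)]
      rw [div_lt_iff₀ hδ] at hk1
      linarith [hk1]
    simp only [hTdef]; linarith
  have hTcover : ∀ t ∈ Ioc (-m) (0:ℝ), ∃ k, T k ≤ t := by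
    intro t ht
    have htm : 0 < t + m := by linarith [ht.1]
    obtain ⟨k, hk⟩ := hTsmall (t + m) htm
    exact ⟨k, by linarith⟩
  -- per (n,k) constants
  choose S K hS0 hK0 hSbd hKlip hSK using fun n k => hfprop n (T k) (hTmem k)
  set B : ℕ → ℝ := fun k => C₁₆ (T k) with hBdef
  have hB0 : ∀ k, 0 ≤ B k := fun k => (hnonneg _ (hTmem k)).1
  have hSB : ∀ n k, S n k ≤ B k := fun n k => by
    have := hSK n k; have := hK0 n k; simp only [hBdef]; linarith
  have hKB : ∀ n k, K n k ≤ B k := fun n k => by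
    have := hSK n k; have := hS0 n k; simp only [hBdef]; linarith
  -- distance comparison on products
  have hdistq : ∀ k (q q' : ↥(Icc (T k) 0) × Torus p),
      |(q.1 : ℝ) - (q'.1 : ℝ)| + dist q.2 q'.2 ≤ 2 * dist q q' := by
    intro k q q'
    rw [Prod.dist_eq]
    have h1 : |(q.1 : ℝ) - (q'.1 : ℝ)| = dist q.1 q'.1 := by
      rw [Subtype.dist_eq, Real.dist_eq]
    rw [h1, two_mul]
    exact add_le_add (le_max_left _ _) (le_max_right _ _)
  -- the bounded continuous functions
  have hFlip : ∀ n k (q q' : ↥(Icc (T k) 0) × Torus p),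
      dist (f n (q.1 : ℝ) q.2) (f n (q'.1 : ℝ) q'.2) ≤ 2 * B k * dist q q' := by
    intro n k q q'
    rw [Real.dist_eq]
    calc |f n (q.1 : ℝ) q.2 - f n (q'.1 : ℝ) q'.2|
        ≤ K n k * (|(q.1 : ℝ) - (q'.1 : ℝ)| + dist q.2 q'.2) :=
          hKlip n k _ q.1.2 _ q'.1.2 _ _
      _ ≤ K n k * (2 * dist q q') := by
          refine mul_le_mul_of_nonneg_left (hdistq k q q') (hK0 n k)
      _ ≤ B k * (2 * dist q q') := by
          refine mul_le_mul_of_nonneg_right (hKB n k) (by positivity)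
      _ = 2 * B k * dist q q' := by ring
  set F : ∀ (_n : ℕ) (k : ℕ), BoundedContinuousFunction (↥(Icc (T k) 0) × Torus p) ℝ :=
    fun n k => BoundedContinuousFunction.mkOfBound
      ⟨fun q => f n (q.1 : ℝ) q.2,
        (LipschitzWith.of_dist_le_mul (K := (2 * B k).toNNReal) (fun q q' => by
          refine le_trans (hFlip n k q q') ?_
          refine mul_le_mul_of_nonneg_right ?_ dist_nonneg
          exact Real.le_coe_toNNReal _)).continuous⟩
      (2 * B k) (fun q q' => by
        rw [Real.dist_eq]
        refine le_trans (abs_sub _ _) ?_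
        have b1 := le_trans (hSbd n k _ q.1.2 q.2) (hSB n k)
        have b2 := le_trans (hSbd n k _ q'.1.2 q'.2) (hSB n k)
        calc |f n (q.1 : ℝ) q.2| + |f n (q'.1 : ℝ) q'.2| ≤ B k + B k := add_le_add b1 b2
          _ = 2 * B k := by ring) with hFdef
  have hFeval : ∀ n k (q : ↥(Icc (T k) 0) × Torus p), F n k q = f n (q.1 : ℝ) q.2 :=
    fun n k q => rfl
  set A : ∀ k : ℕ, Set (BoundedContinuousFunction (↥(Icc (T k) 0) × Torus p) ℝ) :=
    fun k => {F | (∀ q, |F q| ≤ B k) ∧ ∀ q q', dist (F q) (F q') ≤ 2 * B k * dist q q'}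
    with hAdef
  have hFA : ∀ n k, F n k ∈ A k := by
    intro n k
    constructor
    · intro q
      rw [hFeval]
      exact le_trans (hSbd n k _ q.1.2 q.2) (hSB n k)
    · intro q q'
      rw [hFeval, hFeval]
      exact hFlip n k q q'
  have hAcomp : ∀ k, IsCompact (A k) := by
    intro k
    haveI : CompactSpace ↥(Icc (T k) 0) := isCompact_iff_compactSpace.mp isCompact_Icc
    exact lipset_compact (hB0 k)
  obtain ⟨G, hGmem, φ, hφ, hconv⟩ :=
    (isCompact_univ_pi hAcomp).isSeqCompact (x := fun n k => F n k)
      (fun n => by simp only [Set.mem_univ_pi]; exact fun k => hFA n k)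
  have hcoord : ∀ k, Tendsto (fun n => F (φ n) k) atTop (nhds (G k)) := by
    intro k
    exact tendsto_pi_nhds.mp hconv k
  have hunif : ∀ k, ∀ ε > (0:ℝ), ∀ᶠ n in atTop,
      ∀ t (ht : t ∈ Icc (T k) 0) x, |f (φ n) t x - G k (⟨⟨t, ht⟩, x⟩)| ≤ ε := by
    intro k ε hε
    have := Metric.tendsto_atTop.mp (hcoord k) ε hε
    obtain ⟨N, hN⟩ := this
    refine eventually_atTop.mpr ⟨N, fun n hn t ht x => ?_⟩
    have h1 := BoundedContinuousFunction.dist_coe_le_dist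
      (f := F (φ n) k) (g := G k) (⟨⟨t, ht⟩, x⟩)
    rw [hFeval] at h1
    calc |f (φ n) t x - G k (⟨⟨t, ht⟩, x⟩)|
        = dist (f (φ n) t x) (G k (⟨⟨t, ht⟩, x⟩)) := (Real.dist_eq _ _).symm
      _ ≤ dist (F (φ n) k) (G k) := h1
      _ ≤ ε := (hN n hn).le
  have hptconv : ∀ k t (ht : t ∈ Icc (T k) 0) x,
      Tendsto (fun n => f (φ n) t x) atTop (nhds (G k (⟨⟨t, ht⟩, x⟩))) := by
    intro k t ht x
    rw [Metric.tendsto_atTop]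
    intro ε hε
    obtain ⟨N, hN⟩ := eventually_atTop.mp (hunif k (ε/2) (half_pos hε))
    refine ⟨N, fun n hn => ?_⟩
    rw [Real.dist_eq]
    exact lt_of_le_of_lt (hN n hn t ht x) (half_lt_self hε)
  -- the limit density
  set g : ℝ → Torus p → ℝ := fun t x => limUnder atTop (fun n => f (φ n) t x) with hgdef
  have hIoc_of_Icc : ∀ k t, t ∈ Icc (T k) 0 → t ∈ Ioc (-m) (0:ℝ) := by
    intro k t ht
    exact ⟨lt_of_lt_of_le (hTmem k).1 ht.1, ht.2⟩
  have hgval : ∀ k t (ht : t ∈ Icc (T k) 0) x, g t x = G k (⟨⟨t, ht⟩, x⟩) :=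
    fun k t ht x => (hptconv k t ht x).limUnder_eq
  have hgconv : ∀ t ∈ Ioc (-m) (0:ℝ), ∀ x,
      Tendsto (fun n => f (φ n) t x) atTop (nhds (g t x)) := by
    intro t ht x
    obtain ⟨k, hk⟩ := hTcover t ht
    have ht' : t ∈ Icc (T k) 0 := ⟨hk, ht.2⟩
    rw [hgval k t ht' x]
    exact hptconv k t ht' x
  have hunifg : ∀ k, ∀ ε > (0:ℝ), ∀ᶠ n in atTop,
      ∀ t ∈ Icc (T k) 0, ∀ x, |f (φ n) t x - g t x| ≤ ε := by
    intro k ε hε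
    filter_upwards [hunif k ε hε] with n hn t ht x
    rw [hgval k t ht x]
    exact hn t ht x
  -- limit bounds on every [T,0]
  have hglim : ∀ T' ∈ Ioc (-m) (0:ℝ), ∃ S' K' : ℝ, 0 ≤ S' ∧ 0 ≤ K' ∧
      (∀ t ∈ Icc T' (0:ℝ), ∀ x, |g t x| ≤ S') ∧
      (∀ t ∈ Icc T' (0:ℝ), ∀ s ∈ Icc T' (0:ℝ), ∀ x y,
        |g t x - g s y| ≤ K' * (|t - s| + dist x y)) ∧
      S' + K' ≤ C₁₆ T' := by
    intro T' hT'
    choose S' K' h1 h2 h3 h4 h5 using fun n => hfprop n T' hT'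
    have hmem : ∀ n, (S' (φ n), K' (φ n)) ∈ Icc (0:ℝ) (C₁₆ T') ×ˢ Icc (0:ℝ) (C₁₆ T') := by
      intro n
      constructor
      · exact ⟨h1 _, by linarith [h5 (φ n), h2 (φ n)]⟩
      · exact ⟨h2 _, by linarith [h5 (φ n), h1 (φ n)]⟩
    obtain ⟨⟨Si, Ki⟩, hmemi, ψ, hψ, hconv2⟩ :=
      (isCompact_Icc.prod isCompact_Icc).tendsto_subseq hmem
    have hStend : Tendsto (fun j => S' (φ (ψ j))) atTop (nhds Si) :=
      (continuous_fst.tendsto _).comp hconv2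
    have hKtend : Tendsto (fun j => K' (φ (ψ j))) atTop (nhds Ki) :=
      (continuous_snd.tendsto _).comp hconv2
    have hIcc_sub : ∀ t, t ∈ Icc T' (0:ℝ) → t ∈ Ioc (-m) (0:ℝ) :=
      fun t ht => ⟨lt_of_lt_of_le hT'.1 ht.1, ht.2⟩
    refine ⟨Si, Ki, hmemi.1.1, hmemi.2.1, ?_, ?_, ?_⟩
    · intro t ht x
      have hpt : Tendsto (fun j => |f (φ (ψ j)) t x|) atTop (nhds |g t x|) :=
        (Tendsto.abs ((hgconv t (hIcc_sub t ht) x).comp hψ.tendsto_atTop))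
      exact le_of_tendsto_of_tendsto' hpt hStend (fun j => h3 (φ (ψ j)) t ht x)
    · intro t ht s hs x y
      have hpt : Tendsto (fun j => |f (φ (ψ j)) t x - f (φ (ψ j)) s y|) atTop
          (nhds |g t x - g s y|) :=
        (Tendsto.abs (((hgconv t (hIcc_sub t ht) x).comp hψ.tendsto_atTop).sub
          ((hgconv s (hIcc_sub s hs) y).comp hψ.tendsto_atTop)))
      have hKt : Tendsto (fun j => K' (φ (ψ j)) * (|t - s| + dist x y)) atTop
          (nhds (Ki * (|t - s| + dist x y))) := hKtend.mul_const _
      exact le_of_tendsto_of_tendsto' hpt hKt (fun j => h4 (φ (ψ j)) t ht s hs x y)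
    · exact le_of_tendsto (hStend.add hKtend)
        (Eventually.of_forall fun j => h5 (φ (ψ j)))
  -- continuity/nonnegativity of the limit density
  have hcont_of_lip : ∀ (h : Torus p → ℝ) (K' : ℝ),
      (∀ x y, |h x - h y| ≤ K' * dist x y) → Continuous h := by
    intro h K' hK'
    refine (LipschitzWith.of_dist_le_mul (K := K'.toNNReal) (f := h) fun x y => ?_).continuous
    rw [Real.dist_eq]
    refine le_trans (hK' x y) (mul_le_mul_of_nonneg_right (Real.le_coe_toNNReal _) dist_nonneg)
  have hgcont : ∀ t ∈ Ioc (-m) (0:ℝ), Continuous (g t) := by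
    intro t ht
    obtain ⟨S', K', _, _, _, hlip, _⟩ := hglim t ht
    have htIcc : t ∈ Icc t (0:ℝ) := ⟨le_refl t, ht.2⟩
    refine hcont_of_lip (g t) K' fun x y => ?_
    have := hlip t htIcc t htIcc x y
    simpa using this
  have hg0 : ∀ t ∈ Ioc (-m) (0:ℝ), ∀ x, 0 ≤ g t x := by
    intro t ht x
    exact le_of_tendsto_of_tendsto' tendsto_const_nhds (hgconv t ht x)
      (fun n => hf0 (φ n) t x)
  have hfcont : ∀ n, ∀ t ∈ Ioc (-m) (0:ℝ), Continuous (f n t) := by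
    intro n t ht
    obtain ⟨S', K', _, _, _, hlip, _⟩ := hfprop n t ht
    have htIcc : t ∈ Icc t (0:ℝ) := ⟨le_refl t, ht.2⟩
    refine hcont_of_lip (f n t) K' fun x y => ?_
    have := hlip t htIcc t htIcc x y
    simpa using this
  -- the limit curve
  set R₀ : ℝ → Measure (Torus p) := fun t =>
    if h : t ∈ Ioc (-m) (0:ℝ)
    then (volume : Measure (Torus p)).withDensity (fun x => ENNReal.ofReal (g t x))
    else μ with hR₀def
  have hR₀Ioc : ∀ t ∈ Ioc (-m) (0:ℝ),
      R₀ t = (volume : Measure (Torus p)).withDensity (fun x => ENNReal.ofReal (g t x)) :=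
    fun t ht => dif_pos ht
  have hR₀m : R₀ (-m) = μ := by
    refine dif_neg ?_
    rintro ⟨hlt, -⟩
    exact lt_irrefl _ hlt
  -- integrals of densities
  have hfint : ∀ n, ∀ t ∈ Ioc (-m) (0:ℝ),
      ∫ x, f n t x ∂(volume : Measure (Torus p)) = 1 := by
    intro n t ht
    obtain ⟨S', K', _, _, hbd, _, _⟩ := hfprop n t ht
    have htIcc : t ∈ Icc t (0:ℝ) := ⟨le_refl t, ht.2⟩
    have hInt : Integrable (f n t) (volume : Measure (Torus p)) :=
      integrable_of_bound _ ((hfcont n t ht).aestronglyMeasurable) S'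
        (fun x => hbd t htIcc x)
    have h1 : ENNReal.ofReal (∫ x, f n t x ∂(volume : Measure (Torus p)))
        = ∫⁻ x, ENNReal.ofReal (f n t x) ∂(volume : Measure (Torus p)) :=
      ofReal_integral_eq_lintegral_ofReal hInt (ae_of_all _ (hf0 n t))
    have h2 : (∫⁻ x, ENNReal.ofReal (f n t x) ∂(volume : Measure (Torus p))) = 1 := by
      have hprob' : IsProbabilityMeasure (R n t) :=
        hprob n t ⟨ht.1.le, ht.2⟩
      have := hprob'.measure_univ
      rw [hfwd n t ht, withDensity_apply _ MeasurableSet.univ, Measure.restrict_univ] at this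
      exact this
    rw [h2] at h1
    exact ENNReal.ofReal_eq_one.mp h1
  have hgint : ∀ t ∈ Ioc (-m) (0:ℝ), ∫ x, g t x ∂(volume : Measure (Torus p)) = 1 := by
    intro t ht
    obtain ⟨k, hk⟩ := hTcover t ht
    have htIcc : t ∈ Icc (T k) 0 := ⟨hk, ht.2⟩
    obtain ⟨S', K', _, _, hbd, _, _⟩ := hglim t ht
    have hgInt : Integrable (g t) (volume : Measure (Torus p)) :=
      integrable_of_bound _ (hgcont t ht).aestronglyMeasurable S'
        (fun x => hbd t ⟨le_refl t, ht.2⟩ x)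
    have key : ∀ ε > (0:ℝ), |(∫ x, g t x ∂(volume : Measure (Torus p))) - 1| ≤ ε := by
      intro ε hε
      obtain ⟨n, hn⟩ := (hunifg k ε hε).exists
      obtain ⟨S2, K2, _, _, hbd2, _, _⟩ := hfprop (φ n) t ht
      have hfInt : Integrable (f (φ n) t) (volume : Measure (Torus p)) :=
        integrable_of_bound _ ((hfcont (φ n) t ht).aestronglyMeasurable) S2
          (fun x => hbd2 t ⟨le_refl t, ht.2⟩ x)
      have heq : (∫ x, g t x ∂(volume : Measure (Torus p))) - 1
          = ∫ x, (g t x - f (φ n) t x) ∂(volume : Measure (Torus p)) := by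
        rw [integral_sub hgInt hfInt, hfint (φ n) t ht]
      rw [heq]
      have hb := norm_integral_le_of_norm_le_const (μ := (volume : Measure (Torus p)))
        (f := fun x => g t x - f (φ n) t x) (C := ε)
        (ae_of_all _ fun x => by
          rw [Real.norm_eq_abs, abs_sub_comm]
          exact hn t htIcc x)
      simpa [measure_univ] using hb
    have h0 : |(∫ x, g t x ∂(volume : Measure (Torus p))) - 1| ≤ 0 :=
      le_of_forall_pos_le_add (fun ε hε => by simpa using key ε hε)
    have := abs_eq_zero.mp (le_antisymm h0 (abs_nonneg _))
    linarith
  have hR₀prob : ∀ t ∈ Icc (-m) (0:ℝ), IsProbabilityMeasure (R₀ t) := by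
    intro t ht
    rcases eq_or_lt_of_le ht.1 with heq | hlt
    · rw [← heq, hR₀m]; infer_instance
    · have htIoc : t ∈ Ioc (-m) (0:ℝ) := ⟨hlt, ht.2⟩
      rw [hR₀Ioc t htIoc]
      constructor
      obtain ⟨S', K', _, _, hbd, _, _⟩ := hglim t htIoc
      have hgInt : Integrable (g t) (volume : Measure (Torus p)) :=
        integrable_of_bound _ (hgcont t htIoc).aestronglyMeasurable S'
          (fun x => hbd t ⟨le_refl t, htIoc.2⟩ x)
      rw [withDensity_apply _ MeasurableSet.univ, Measure.restrict_univ,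
        ← ofReal_integral_eq_lintegral_ofReal hgInt (ae_of_all _ (hg0 t htIoc)),
        hgint t htIoc, ENNReal.ofReal_one]
  have hW1unif : ∀ k, ∀ ε > (0:ℝ), ∀ᶠ n in atTop,
      ∀ t ∈ Icc (T k) 0, W1 (R (φ n) t) (R₀ t) ≤ D * ε := by
    intro k ε hε
    filter_upwards [hunifg k ε hε] with n hn t ht
    have htIoc := hIoc_of_Icc k t ht
    have hpf : IsProbabilityMeasure
        ((volume : Measure (Torus p)).withDensity fun x => ENNReal.ofReal (f (φ n) t x)) := by
      rw [← hfwd (φ n) t htIoc]; exact hprob (φ n) t ⟨htIoc.1.le, htIoc.2⟩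
    have hpg : IsProbabilityMeasure
        ((volume : Measure (Torus p)).withDensity fun x => ENNReal.ofReal (g t x)) := by
      rw [← hR₀Ioc t htIoc]; exact hR₀prob t ⟨htIoc.1.le, htIoc.2⟩
    rw [hfwd (φ n) t htIoc, hR₀Ioc t htIoc]
    exact W1_wd_le (volume : Measure (Torus p)) (hfcont (φ n) t htIoc) (hgcont t htIoc)
      (hf0 (φ n) t) (hg0 t htIoc) hpf hpg (E := ε) (fun x => hn t ht x)
  have hW1R₀μ : ∀ T' ∈ Ioc (-m) (0:ℝ), W1 (R₀ T') μ ≤ C₁₇ T' := by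
    intro T' hT'
    haveI hIT : IsProbabilityMeasure (R₀ T') := hR₀prob T' ⟨hT'.1.le, hT'.2⟩
    refine le_of_forall_pos_le_add fun ε hε => ?_
    obtain ⟨k, hk⟩ := hTcover T' hT'
    have hT'Icc : T' ∈ Icc (T k) 0 := ⟨hk, hT'.2⟩
    obtain ⟨n, hn⟩ := (hW1unif k (ε / (D + 1)) (by positivity)).exists
    haveI := hprob (φ n) T' ⟨hT'.1.le, hT'.2⟩
    have htri := W1_triangle (R₀ T') (R (φ n) T') μ
    have hsym : W1 (R₀ T') (R (φ n) T') = W1 (R (φ n) T') (R₀ T') := W1_symm _ _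
    have h17 : W1 (R (φ n) T') μ ≤ C₁₇ T' := (hR (φ n)).2.2.2.2 T' hT'
    have hsmall : W1 (R (φ n) T') (R₀ T') ≤ D * (ε / (D + 1)) := hn T' hT'Icc
    have hDe : D * (ε / (D + 1)) ≤ ε := by
      rw [mul_div_assoc']
      rw [div_le_iff₀ (by positivity)]
      nlinarith
    calc W1 (R₀ T') μ ≤ W1 (R₀ T') (R (φ n) T') + W1 (R (φ n) T') μ := htri
      _ ≤ D * (ε / (D + 1)) + C₁₇ T' := by rw [hsym]; exact add_le_add hsmall h17
      _ ≤ C₁₇ T' + ε := by linarith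
  -- continuity of the limit curve
  have hcontR₀ : ∀ t ∈ Icc (-m) (0:ℝ), ∀ ε > (0:ℝ), ∃ δ > (0:ℝ),
      ∀ s ∈ Icc (-m) (0:ℝ), |s - t| < δ → W1 (R₀ s) (R₀ t) < ε := by
    intro t ht ε hε
    rcases eq_or_lt_of_le ht.1 with pteq | ptlt
    · -- t = -m
      have hev := Metric.tendsto_nhds.mp hC17lim (ε/2) (by positivity)
      obtain ⟨δ, hδpos, hδ⟩ := Metric.mem_nhdsWithin_iff.mp hev
      refine ⟨δ, hδpos, fun s hs hd => ?_⟩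
      rcases eq_or_lt_of_le hs.1 with pseq | pslt
      · rw [← pseq, ← pteq, hR₀m, W1_self]
        exact hε
      · have hsIoc : s ∈ Ioc (-m) (0:ℝ) := ⟨pslt, hs.2⟩
        haveI := hR₀prob s hs
        have hmem : s ∈ Metric.ball (-m) δ ∩ Ioi (-m) := by
          refine ⟨?_, pslt⟩
          rw [Metric.mem_ball, Real.dist_eq]
          rw [← pteq] at hd
          exact hd
        have hsmall : dist (C₁₇ s) 0 < ε/2 := hδ hmem
        rw [Real.dist_eq, sub_zero] at hsmall
        rw [← pteq, hR₀m]
        calc W1 (R₀ s) μ ≤ C₁₇ s := hW1R₀μ s hsIoc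
          _ ≤ |C₁₇ s| := le_abs_self _
          _ < ε/2 := hsmall
          _ < ε := by linarith
    · -- -m < t
      have htIoc : t ∈ Ioc (-m) (0:ℝ) := ⟨ptlt, ht.2⟩
      set T' := (-m + t)/2 with hT'def
      have hT'lt : T' < t := by rw [hT'def]; linarith
      have hT'Ioc : T' ∈ Ioc (-m) (0:ℝ) := by
        constructor
        · rw [hT'def]; linarith
        · rw [hT'def]; linarith [ht.2]
      obtain ⟨S', K', hS'0, hK'0, hbd, hlip, hSK'⟩ := hglim T' hT'Ioc
      refine ⟨min (t - T') (ε / (D * K' + 1)), lt_min (by linarith) (by positivity),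
        fun s hs hd => ?_⟩
      have habs := abs_lt.mp (lt_of_lt_of_le hd (min_le_left _ _))
      have hs_gt : T' < s := by linarith [habs.1]
      have hsIoc : s ∈ Ioc (-m) (0:ℝ) := ⟨lt_trans hT'Ioc.1 hs_gt, hs.2⟩
      have hsIcc : s ∈ Icc T' (0:ℝ) := ⟨hs_gt.le, hs.2⟩
      have htIcc : t ∈ Icc T' (0:ℝ) := ⟨hT'lt.le, ht.2⟩
      have hps : IsProbabilityMeasure
          ((volume : Measure (Torus p)).withDensity fun x => ENNReal.ofReal (g s x)) := by
        rw [← hR₀Ioc s hsIoc]; exact hR₀prob s hs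
      have hpt : IsProbabilityMeasure
          ((volume : Measure (Torus p)).withDensity fun x => ENNReal.ofReal (g t x)) := by
        rw [← hR₀Ioc t htIoc]; exact hR₀prob t ht
      rw [hR₀Ioc s hsIoc, hR₀Ioc t htIoc]
      have hE : ∀ x, |g s x - g t x| ≤ K' * |s - t| := fun x => by
        have := hlip s hsIcc t htIcc x x
        simpa using this
      have hW := W1_wd_le (volume : Measure (Torus p)) (hgcont s hsIoc) (hgcont t htIoc)
        (hg0 s hsIoc) (hg0 t htIoc) hps hpt (E := K' * |s - t|) hE
      have ha : 0 ≤ D * K' := mul_nonneg hD0 hK'0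
      have habs2 : |s - t| ≤ ε / (D * K' + 1) :=
        le_of_lt (lt_of_lt_of_le hd (min_le_right _ _))
      have h2 : (D * K') * |s - t| ≤ (D * K') * (ε / (D * K' + 1)) :=
        mul_le_mul_of_nonneg_left habs2 ha
      have h3 : (D * K') * (ε / (D * K' + 1)) < ε := by
        rw [mul_div_assoc', div_lt_iff₀ (by positivity)]
        nlinarith
      calc W1 _ _ ≤ D * (K' * |s - t|) := hW
        _ = (D * K') * |s - t| := by ring
        _ ≤ (D * K') * (ε / (D * K' + 1)) := h2
        _ < ε := h3
  -- final assembly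
  refine ⟨R₀, ⟨hR₀prob, hcontR₀, hR₀m, ⟨g, hR₀Ioc, hglim⟩, hW1R₀μ⟩, φ, hφ, ?_⟩
  haveI : Nonempty ↥(Icc (-m) (0:ℝ)) :=
    Nonempty.to_subtype (nonempty_Icc.mpr (by linarith))
  rw [Metric.tendsto_atTop]
  intro ε hε
  have hev := Metric.tendsto_nhds.mp hC17lim (ε/8) (by positivity)
  obtain ⟨δ, hδpos, hδ⟩ := Metric.mem_nhdsWithin_iff.mp hev
  obtain ⟨k, hkδ⟩ := hTsmall δ hδpos
  obtain ⟨N, hN⟩ := eventually_atTop.mp (hW1unif k (ε/(8*(D+1))) (by positivity))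
  refine ⟨N, fun n hn => ?_⟩
  have hC17small : ∀ s ∈ Ioc (-m) (0:ℝ), s ≤ T k → C₁₇ s < ε/8 := by
    intro s hs hsk
    have hmem : s ∈ Metric.ball (-m) δ ∩ Ioi (-m) := by
      refine ⟨?_, hs.1⟩
      rw [Metric.mem_ball, Real.dist_eq, sub_neg_eq_add, abs_of_pos (by linarith [hs.1])]
      linarith [hkδ]
    have : dist (C₁₇ s) 0 < ε/8 := hδ hmem
    rw [Real.dist_eq, sub_zero] at this
    calc C₁₇ s ≤ |C₁₇ s| := le_abs_self _
      _ < ε/8 := this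
  have hsup : (⨆ t : Icc (-m) (0:ℝ), W1 (R (φ n) t) (R₀ t)) ≤ ε/2 := by
    refine ciSup_le fun t => ?_
    obtain ⟨ht1, ht2⟩ := t.2
    rcases eq_or_lt_of_le ht1 with heq | hlt
    · have hteq : (t : ℝ) = -m := heq.symm
      rw [hteq, hR₀m, (hR (φ n)).2.2.1, W1_self]
      linarith
    · have htIoc : (t:ℝ) ∈ Ioc (-m) (0:ℝ) := ⟨hlt, ht2⟩
      haveI := hprob (φ n) t ⟨ht1, ht2⟩
      haveI := hR₀prob t ⟨ht1, ht2⟩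
      rcases le_total ((t:ℝ)) (T k) with hle | hge
      · have h17n : W1 (R (φ n) t) μ ≤ C₁₇ t := (hR (φ n)).2.2.2.2 t htIoc
        have h17R₀ : W1 (R₀ t) μ ≤ C₁₇ t := hW1R₀μ t htIoc
        have hC := hC17small t htIoc hle
        have htri := W1_triangle (R (φ n) (t:ℝ)) μ (R₀ (t:ℝ))
        have hsym : W1 μ (R₀ (t:ℝ)) = W1 (R₀ (t:ℝ)) μ := W1_symm _ _
        calc W1 (R (φ n) t) (R₀ t) ≤ W1 (R (φ n) t) μ + W1 μ (R₀ t) := htri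
          _ ≤ C₁₇ t + C₁₇ t := by rw [hsym]; exact add_le_add h17n h17R₀
          _ ≤ ε/2 := by linarith
      · have hb := hN n hn t ⟨hge, ht2⟩
        have hDe : D * (ε/(8*(D+1))) ≤ ε/2 := by
          rw [mul_div_assoc', div_le_iff₀ (by positivity)]
          nlinarith
        linarith
  have hsup0 : 0 ≤ (⨆ t : Icc (-m) (0:ℝ), W1 (R (φ n) t) (R₀ t)) :=
    Real.iSup_nonneg fun t => W1_nonneg _ _
  rw [Real.dist_eq, sub_zero, abs_of_nonneg hsup0]
  linarith
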